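/- Every non-planar finite simple graph with 6 vertices, 9 edges, and minimum degree at least 1 is isomorphic to the complete bipartite graph K3,3. -/

import Mathlib

/-- `H` is a minor of `G`: there are pairwise disjoint nonempty connected branch sets
in `G`, one for each vertex of `H`, with an edge of `G` between the branch sets of
any two vertices adjacent in `H`. -/
def SimpleGraph.IsMinor {W V : Type*} (H : SimpleGraph W) (G : SimpleGraph V) : Prop :=
  ∃ f : W → Set V,
    (∀ w, (f w).Nonempty) ∧
    (∀ w, (G.induce (f w)).Connected) ∧
    (Pairwise fun w₁ w₂ => Disjoint (f w₁) (f w₂)) ∧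
    ∀ ⦃w₁ w₂⦄, H.Adj w₁ w₂ → ∃ v₁ ∈ f w₁, ∃ v₂ ∈ f w₂, G.Adj v₁ v₂

/-- A graph is planar iff it has no `K₅` minor and no `K₃,₃` minor (Kuratowski–Wagner). -/
def SimpleGraph.IsPlanar {V : Type*} (G : SimpleGraph V) : Prop :=
  ¬ (⊤ : SimpleGraph (Fin 5)).IsMinor G ∧
  ¬ (completeBipartiteGraph (Fin 3) (Fin 3)).IsMinor G

/-- A graph is 2-apex if it becomes planar after deleting at most two vertices. -/
def SimpleGraph.TwoApex {V : Type*} (G : SimpleGraph V) : Prop :=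
  ∃ s : Set V, s.ncard ≤ 2 ∧ (G.induce sᶜ).IsPlanar

open SimpleGraph

-- no K5 minor lemma
lemma aux_no_K5 {V : Type*} [Fintype V] (G : SimpleGraph V) (hE : G.edgeSet.ncard = 9) :
    ¬ (⊤ : SimpleGraph (Fin 5)).IsMinor G := by
  classical
  rintro ⟨f, hne, hconn, hdisj, hadj⟩
  have hVne : Nonempty V := ⟨(hne 0).some⟩
  have key : ∀ p : Fin 5 × Fin 5, p.1 < p.2 →
      ∃ q : V × V, q.1 ∈ f p.1 ∧ q.2 ∈ f p.2 ∧ G.Adj q.1 q.2 := by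
    intro p hp
    obtain ⟨v₁, h₁, v₂, h₂, h⟩ := hadj (show (⊤ : SimpleGraph (Fin 5)).Adj p.1 p.2 by
      simp [hp.ne])
    exact ⟨(v₁, v₂), h₁, h₂, h⟩
  choose q hq1 hq2 hq3 using key
  set P : Finset (Fin 5 × Fin 5) := Finset.univ.filter (fun p => p.1 < p.2) with hP
  have hPcard : P.card = 10 := by decide
  set g : Fin 5 × Fin 5 → Sym2 V := fun p =>
    if h : p.1 < p.2 then s((q p h).1, (q p h).2) else s(Classical.arbitrary V, Classical.arbitrary V) with hg
  have hmem : ∀ i j (x : V), x ∈ f i → x ∈ f j → i = j := by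
    intro i j x hi hj
    by_contra hne'
    exact (hdisj hne').le_bot ⟨hi, hj⟩
  have hmaps : ∀ p ∈ P, g p ∈ G.edgeFinset := by
    intro p hp
    have h : p.1 < p.2 := by simpa [hP] using hp
    simp only [hg, dif_pos h, SimpleGraph.mem_edgeFinset, SimpleGraph.mem_edgeSet]
    exact hq3 p h
  have hinj : Set.InjOn g P := by
    intro p hp p' hp' heq
    have h : p.1 < p.2 := by simpa [hP] using hp
    have h' : p'.1 < p'.2 := by simpa [hP] using hp'
    simp only [hg, dif_pos h, dif_pos h', Sym2.eq_iff] at heq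
    rcases heq with ⟨e1, e2⟩ | ⟨e1, e2⟩
    · have := hmem p.1 p'.1 _ (hq1 p h) (e1 ▸ hq1 p' h')
      have := hmem p.2 p'.2 _ (hq2 p h) (e2 ▸ hq2 p' h')
      exact Prod.ext ‹p.1 = p'.1› ‹p.2 = p'.2›
    · have h12 := hmem p.1 p'.2 _ (hq1 p h) (e1 ▸ hq2 p' h')
      have h21 := hmem p.2 p'.1 _ (hq2 p h) (e2 ▸ hq1 p' h')
      rw [h12, h21] at h
      exact absurd (h.trans h') (lt_irrefl _)
  have hle : P.card ≤ G.edgeFinset.card := Finset.card_le_card_of_injOn g hmaps hinj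
  have : G.edgeFinset.card = 9 := by
    rw [← hE, Set.ncard_eq_toFinset_card']
    exact congrArg Finset.card (by ext; simp)
  omega

local instance : DecidableRel (completeBipartiteGraph (Fin 3) (Fin 3)).Adj := fun a b => by
  unfold completeBipartiteGraph; dsimp; infer_instance

lemma aux_K33_card : (completeBipartiteGraph (Fin 3) (Fin 3)).edgeSet.ncard = 9 := by
  rw [Set.ncard_eq_toFinset_card']
  decide

/-- Every non-planar graph with 6 vertices, 9 edges and minimum degree at least 1
is isomorphic to `K₃,₃`. -/
theorem stmt15 {V : Type*} [Fintype V] (G : SimpleGraph V)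
    (hV : Fintype.card V = 6) (hE : G.edgeSet.ncard = 9)
    (hmin : ∀ v : V, 1 ≤ (G.neighborSet v).ncard)
    (hnp : ¬ G.IsPlanar) :
    Nonempty (G ≃g completeBipartiteGraph (Fin 3) (Fin 3)) := by
  classical
  rw [SimpleGraph.IsPlanar, not_and_or, not_not, not_not] at hnp
  rcases hnp with h5 | h33
  · exact absurd h5 (aux_no_K5 G hE)
  obtain ⟨f, hne, hconn, hdisj, hadj⟩ := h33
  set K := completeBipartiteGraph (Fin 3) (Fin 3) with hK
  -- the chosen points
  set e0 : Fin 3 ⊕ Fin 3 → V := fun w => (hne w).some with he0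
  have he0mem : ∀ w, e0 w ∈ f w := fun w => (hne w).some_mem
  have hmem : ∀ i j (x : V), x ∈ f i → x ∈ f j → i = j := by
    intro i j x hi hj
    by_contra hne'
    exact (hdisj hne').le_bot ⟨hi, hj⟩
  have hinj : Function.Injective e0 := by
    intro w₁ w₂ h
    exact hmem w₁ w₂ _ (he0mem w₁) (h ▸ he0mem w₂)
  have hbij : Function.Bijective e0 := by
    rw [Fintype.bijective_iff_injective_and_card]
    exact ⟨hinj, by simp [hV]⟩
  set e : (Fin 3 ⊕ Fin 3) ≃ V := Equiv.ofBijective e0 hbij with he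
  have hsing : ∀ w, f w = {e0 w} := by
    intro w
    ext x
    simp only [Set.mem_singleton_iff]
    constructor
    · intro hx
      obtain ⟨w', rfl⟩ := hbij.2 x
      rw [hmem w' w _ (he0mem w') hx]
    · rintro rfl; exact he0mem w
  have hpres : ∀ w₁ w₂, K.Adj w₁ w₂ → G.Adj (e0 w₁) (e0 w₂) := by
    intro w₁ w₂ h
    obtain ⟨v₁, h₁, v₂, h₂, hG⟩ := hadj h
    rw [hsing w₁, Set.mem_singleton_iff] at h₁
    rw [hsing w₂, Set.mem_singleton_iff] at h₂
    rwa [← h₁, ← h₂]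
  -- edge set equality
  have hK9 : K.edgeSet.ncard = 9 := aux_K33_card
  have hsub : Sym2.map e0 '' K.edgeSet ⊆ G.edgeSet := by
    rintro ε ⟨ε', hε', rfl⟩
    induction ε' using Sym2.ind with
    | _ w₁ w₂ =>
      rw [Sym2.map_pair_eq, SimpleGraph.mem_edgeSet]
      exact hpres w₁ w₂ ((SimpleGraph.mem_edgeSet _).mp hε')
  have heqs : Sym2.map e0 '' K.edgeSet = G.edgeSet := by
    refine Set.eq_of_subset_of_ncard_le hsub ?_ (Set.toFinite _)
    rw [Set.ncard_image_of_injective _ (Sym2.map.injective hinj), hK9, hE]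
  refine ⟨⟨e.symm, fun {a b} => ?_⟩⟩
  constructor
  · intro h
    have hG := hpres _ _ h
    have h1 : e0 (e.symm a) = a := e.apply_symm_apply a
    have h2 : e0 (e.symm b) = b := e.apply_symm_apply b
    rwa [h1, h2] at hG
  · intro h
    have hm : s(a, b) ∈ Sym2.map e0 '' K.edgeSet := heqs ▸ ((SimpleGraph.mem_edgeSet _).mpr h)
    obtain ⟨ε, hε, hmap⟩ := hm
    revert hε hmap
    induction ε using Sym2.ind with
    | _ w₁ w₂ =>
      intro hε hmap
      rw [Sym2.map_pair_eq, Sym2.eq_iff] at hmap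
      have hKadj : K.Adj w₁ w₂ := (SimpleGraph.mem_edgeSet _).mp hε
      have hw : ∀ w : Fin 3 ⊕ Fin 3, e.symm (e0 w) = w := fun w => e.symm_apply_apply w
      rcases hmap with ⟨ha, hb⟩ | ⟨ha, hb⟩
      · rw [← ha, ← hb, hw, hw]; exact hKadj
      · rw [← ha, ← hb, hw, hw]; exact hKadj.symm
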